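/- Let q be a prime power and let n ≥ 4. For a monic irreducible polynomial f of degree n over F_q with root α in F_{q^n}, define χ(f) := ((α^{q³} − α^q)(α^{q²} − α)) / ((α^{q³} − α)(α^{q²} − α^q)) ∈ F_{q^n}, and define the cross polynomial Cross(f) to be the characteristic polynomial of the F_q-linear map 'multiplication by χ(f)' on F_{q^n} (this is independent of the choice of root α). Let PGL₂(F_q) act on monic irreducible degree-n polynomials by letting the class of a matrix (a b; c d) send the homogenization f(x,y) to the monic scalar multiple of f(dx − by, −cx + ay). Then two monic irreducible polynomials f₁, f₂ of degree n over F_q lie in the same PGL₂(F_q)-orbit if and only if Cross(f₁) = Cross(f₂). -/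

import Mathlib

/-- The action of a matrix `(a b; c d)` on a (degree-`n`) polynomial:
homogenize `f` to degree `n`, substitute `x ↦ dx − by`, `y ↦ −cx + ay`, and
dehomogenize (set `y = 1`).  Explicitly, `f(x,y) = ∑ fᵢ xⁱ y^{n−i}` is sent to
`∑ fᵢ (dX − b)ⁱ (a − cX)^{n−i}`. -/
noncomputable def transform {F : Type*} [Field F] (n : ℕ) (a b c d : F)
    (f : Polynomial F) : Polynomial F :=
  ∑ i ∈ Finset.range (n + 1),
    Polynomial.C (f.coeff i) * (Polynomial.C d * Polynomial.X - Polynomial.C b) ^ i *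
      (Polynomial.C a - Polynomial.C c * Polynomial.X) ^ (n - i)

set_option linter.unusedSectionVars false


open Polynomial

namespace Stmt15Aux

variable {R : Type*} [CommRing R] {m : Type*} [DecidableEq m] [Fintype m]

lemma charmatrix_transpose (M : Matrix m m R) :
    Matrix.charmatrix M.transpose = (Matrix.charmatrix M).transpose := by
  refine Matrix.ext fun i j => ?_
  by_cases h : i = j
  · subst h; simp
  · rw [Matrix.charmatrix_apply_ne _ _ _ h, Matrix.transpose_apply,
      Matrix.transpose_apply, Matrix.charmatrix_apply_ne _ _ _ (Ne.symm h)]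

lemma charpoly_transpose (M : Matrix m m R) : M.transpose.charpoly = M.charpoly := by
  unfold Matrix.charpoly
  rw [charmatrix_transpose, Matrix.det_transpose]

lemma charpoly_diagonal (d : m → R) :
    (Matrix.diagonal d).charpoly = ∏ i, (X - C (d i)) := by
  unfold Matrix.charpoly
  have : Matrix.charmatrix (Matrix.diagonal d) = Matrix.diagonal (fun i => X - C (d i)) := by
    refine Matrix.ext fun i j => ?_
    by_cases h : i = j
    · subst h; simp
    · rw [Matrix.charmatrix_apply_ne _ _ _ h, Matrix.diagonal_apply_ne _ h,
        Matrix.diagonal_apply_ne _ h]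
      simp
  rw [this, Matrix.det_diagonal]

lemma charpoly_of_conj [IsDomain R] (A D P : Matrix m m R) (hP : P.det ≠ 0)
    (h : A * P = P * D) : A.charpoly = D.charpoly := by
  have h1 : Matrix.charmatrix A * P.map C = P.map C * Matrix.charmatrix D := by
    unfold Matrix.charmatrix
    rw [sub_mul, mul_sub]
    congr 1
    · exact (Matrix.scalar_commute (X : R[X]) (fun r => Commute.all _ r) (P.map C)).symm ▸ rfl
    · rw [RingHom.mapMatrix_apply, RingHom.mapMatrix_apply, ← Matrix.map_mul, h, Matrix.map_mul]
  have h2 := congrArg Matrix.det h1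
  rw [Matrix.det_mul, Matrix.det_mul] at h2
  have hPC : (P.map (C : R →+* R[X])).det ≠ 0 := by
    rw [← RingHom.mapMatrix_apply, ← RingHom.map_det]
    simpa using hP
  unfold Matrix.charpoly
  rw [mul_comm] at h2
  exact mul_left_cancel₀ hPC h2

end Stmt15Aux


open Polynomial

namespace Stmt15Aux2

variable {F K : Type*} [Field F] [Fintype F] [Field K] [Algebra F K]

lemma exists_frobQ (q : ℕ) (hF : Fintype.card F = q) :
    ∃ Fr : ℕ → (K →+* K), ∀ k x, Fr k x = x ^ q ^ k := by
  obtain ⟨s, hp, hq⟩ := FiniteField.card F (ringChar F)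
  haveI : Fact (Nat.Prime (ringChar F)) := ⟨hp⟩
  haveI : CharP K (ringChar F) :=
    charP_of_injective_algebraMap (algebraMap F K).injective _
  refine ⟨fun k => iterateFrobenius K (ringChar F) ((s : ℕ) * k), fun k x => ?_⟩
  rw [iterateFrobenius_def, ← hF, hq, ← pow_mul]

lemma charpoly_mulLeft_map [Fintype K] (q n : ℕ) (hF : Fintype.card F = q)
    (hrank : Module.finrank F K = n) (x : K) :
    (LinearMap.charpoly (LinearMap.mulLeft F x)).map (algebraMap F K)
      = ∏ k ∈ Finset.range n, (X - C (x ^ q ^ k)) := by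
  classical
  obtain ⟨Fr, hFr⟩ := exists_frobQ (K := K) q hF
  have hq2 : 1 < q := hF ▸ Fintype.one_lt_card
  have hK : Fintype.card K = q ^ n := by
    rw [Module.card_eq_pow_finrank (K := F) (V := K), hF, hrank]
  haveI : Module.Finite F K := Module.Finite.of_finite
  let b : Module.Basis (Fin n) F K := (Module.finBasis F K).reindex (finCongr hrank)
  let A : Matrix (Fin n) (Fin n) F := LinearMap.toMatrix b b (LinearMap.mulLeft F x)
  let A' : Matrix (Fin n) (Fin n) K := A.map (algebraMap F K)
  let P : Matrix (Fin n) (Fin n) K := Matrix.of fun i k => b i ^ q ^ (k : ℕ)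
  let D : Matrix (Fin n) (Fin n) K := Matrix.diagonal fun k : Fin n => x ^ q ^ (k : ℕ)
  -- Frobenius fixes scalars
  have hsc : ∀ (k : ℕ) (a : F) (y : K), (a • y) ^ q ^ k = a • y ^ q ^ k := by
    intro k a y
    rw [Algebra.smul_def, Algebra.smul_def, mul_pow, ← map_pow]
    congr 2
    rw [← hF]
    exact FiniteField.pow_card_pow k a
  -- expansion of powers via the basis
  have hexp : ∀ (y : K) (k : ℕ),
      y ^ q ^ k = ∑ j : Fin n, algebraMap F K (b.repr y j) * b j ^ q ^ k := by
    intro y k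
    conv_lhs => rw [← Module.Basis.sum_repr b y]
    rw [← hFr, map_sum]
    congr 1
    funext j
    rw [hFr, hsc, Algebra.smul_def]
  have key1 : A'.transpose * P = P * D := by
    refine Matrix.ext fun i k => ?_
    rw [Matrix.mul_apply, Matrix.mul_apply]
    have : ∀ j, A'.transpose i j * P j k = algebraMap F K (b.repr (x * b i) j) * b j ^ q ^ (k : ℕ) := by
      intro j
      simp only [A', A, Matrix.transpose_apply, Matrix.map_apply, LinearMap.toMatrix_apply,
        LinearMap.mulLeft_apply, P, Matrix.of_apply]
    rw [Finset.sum_congr rfl fun j _ => this j, ← hexp (x * b i) (k : ℕ)]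
    have : ∀ j, P i j * D j k = if j = k then (x * b i) ^ q ^ (k : ℕ) else 0 := by
      intro j
      by_cases h : j = k
      · subst h
        simp only [P, D, Matrix.of_apply, Matrix.diagonal_apply_eq, if_true, mul_pow]
        ring
      · simp [P, D, Matrix.diagonal_apply_ne _ h, h]
    rw [Finset.sum_congr rfl fun j _ => this j, Finset.sum_ite_eq' Finset.univ k
      (fun _ => (x * b i) ^ q ^ (k : ℕ))]
    simp
  have key2 : P.det ≠ 0 := by
    intro h0
    obtain ⟨v, hv, hPv⟩ := Matrix.exists_mulVec_eq_zero_iff.mpr h0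
    have hall : ∀ y : K, ∑ k : Fin n, v k * y ^ q ^ (k : ℕ) = 0 := by
      intro y
      have : ∀ k : Fin n, v k * y ^ q ^ (k : ℕ)
          = ∑ j : Fin n, algebraMap F K (b.repr y j) * (P j k * v k) := by
        intro k
        rw [hexp y (k : ℕ), Finset.mul_sum]
        congr 1; funext j
        simp only [P, Matrix.of_apply]; ring
      rw [Finset.sum_congr rfl fun k _ => this k, Finset.sum_comm]
      have : ∀ j : Fin n, ∑ k : Fin n, algebraMap F K (b.repr y j) * (P j k * v k) = 0 := by
        intro j
        rw [← Finset.mul_sum]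
        have : ∑ k : Fin n, P j k * v k = 0 := by
          have := congrFun hPv j
          simpa [Matrix.mulVec, dotProduct] using this
        rw [this, mul_zero]
      rw [Finset.sum_congr rfl fun j _ => this j, Finset.sum_const_zero]
    -- linear independence of power maps
    let ch : ℕ → (Kˣ →* K) := fun k => (powMonoidHom (q ^ k)).comp (Units.coeHom K)
    have hchval : ∀ (k : ℕ) (u : Kˣ), ch k u = (u : K) ^ q ^ k := fun k u => rfl
    have hpowinj : ∀ k j : Fin n, ch (k : ℕ) = ch (j : ℕ) → k = j := by
      intro k j hkj
      by_contra hne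
      have hpow : ∀ y : K, y ^ q ^ (k : ℕ) = y ^ q ^ (j : ℕ) := by
        intro y
        rcases eq_or_ne y 0 with rfl | hy
        · rw [zero_pow (pow_ne_zero _ (by omega)), zero_pow (pow_ne_zero _ (by omega))]
        · have := DFunLike.congr_fun hkj (Units.mk0 y hy)
          simpa [hchval] using this
      -- wlog k < j
      have main : ∀ k' j' : ℕ, k' < j' → j' < n → (∀ y : K, y ^ q ^ k' = y ^ q ^ j') → False := by
        intro k' j' hlt hjn hyp
        set Q : K[X] := X ^ q ^ j' - X ^ q ^ k' with hQ
        have hdeg : Q.natDegree = q ^ j' := by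
          have h1 : (X ^ q ^ k' : K[X]).natDegree < (X ^ q ^ j' : K[X]).natDegree := by
            rw [natDegree_X_pow, natDegree_X_pow]
            exact Nat.pow_lt_pow_right hq2 hlt
          rw [hQ, natDegree_sub_eq_left_of_natDegree_lt h1, natDegree_X_pow]
        have hQne : Q ≠ 0 := by
          intro h
          rw [h, natDegree_zero] at hdeg
          have := Nat.pow_pos (show 0 < q by omega) (n := j')
          omega
        have hroots : (Finset.univ : Finset K) ⊆ Q.roots.toFinset := by
          intro y _
          rw [Multiset.mem_toFinset, mem_roots hQne]
          simp only [hQ, IsRoot.def, eval_sub, eval_pow, eval_X]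
          rw [hyp y, sub_self]
        have hcard : Fintype.card K ≤ q ^ j' := by
          calc Fintype.card K = (Finset.univ : Finset K).card := (Finset.card_univ).symm
            _ ≤ Q.roots.toFinset.card := Finset.card_le_card hroots
            _ ≤ Multiset.card Q.roots := Multiset.toFinset_card_le _
            _ ≤ Q.natDegree := card_roots' _
            _ = q ^ j' := hdeg
        rw [hK] at hcard
        exact absurd hcard (not_le.mpr (Nat.pow_lt_pow_right hq2 hjn))
      rcases lt_trichotomy (k : ℕ) (j : ℕ) with h | h | h
      · exact main k j h j.isLt hpow
      · exact hne (Fin.ext h)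
      · exact main j k h k.isLt fun y => (hpow y).symm
    have li : LinearIndependent K fun k : Fin n => ((ch (k : ℕ) : Kˣ →* K) : Kˣ → K) :=
      (linearIndependent_monoidHom Kˣ K).comp (fun k : Fin n => ch (k : ℕ))
        fun k j h => hpowinj k j h
    have := Fintype.linearIndependent_iff.mp li v ?_
    · exact hv (funext fun k => this k)
    · funext u
      rw [Finset.sum_apply]
      have : ∀ k : Fin n, (v k • ((ch (k : ℕ) : Kˣ →* K) : Kˣ → K)) u
          = v k * (u : K) ^ q ^ (k : ℕ) := by
        intro k; rw [Pi.smul_apply, hchval, smul_eq_mul]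
      rw [Finset.sum_congr rfl fun k _ => this k, hall]
      rfl
  -- assemble
  calc (LinearMap.charpoly (LinearMap.mulLeft F x)).map (algebraMap F K)
      = A.charpoly.map (algebraMap F K) := by
        rw [LinearMap.charpoly_toMatrix (LinearMap.mulLeft F x) b]
    _ = A'.charpoly := (Matrix.charpoly_map A (algebraMap F K)).symm
    _ = A'.transpose.charpoly := (Stmt15Aux.charpoly_transpose A').symm
    _ = D.charpoly := Stmt15Aux.charpoly_of_conj _ _ P key2 key1
    _ = ∏ i : Fin n, (X - C (x ^ q ^ (i : ℕ))) := Stmt15Aux.charpoly_diagonal _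
    _ = ∏ k ∈ Finset.range n, (X - C (x ^ q ^ k)) :=
        Fin.prod_univ_eq_prod_range (fun k => (X : K[X]) - C (x ^ q ^ k)) n

end Stmt15Aux2


open Polynomial

namespace Stmt15Aux

variable {F K : Type*} [Field F] [Fintype F] [Field K] [Algebra F K]

lemma exists_frobQ (q : ℕ) (hF : Fintype.card F = q) :
    ∃ Fr : ℕ → (K →+* K), ∀ k x, Fr k x = x ^ q ^ k := by
  obtain ⟨s, hp, hq⟩ := FiniteField.card F (ringChar F)
  haveI : Fact (Nat.Prime (ringChar F)) := ⟨hp⟩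
  haveI : CharP K (ringChar F) :=
    charP_of_injective_algebraMap (algebraMap F K).injective _
  refine ⟨fun k => iterateFrobenius K (ringChar F) ((s : ℕ) * k), fun k x => ?_⟩
  rw [iterateFrobenius_def, ← hF, hq, ← pow_mul]

lemma fixed_of_frob (q : ℕ) (hF : Fintype.card F = q) (x : K) (hx : x ^ q = x) :
    ∃ a : F, algebraMap F K a = x := by
  classical
  have hq2 : 1 < q := hF ▸ Fintype.one_lt_card
  have hdeg : ((X : K[X]) ^ q - X).natDegree = q :=
    FiniteField.X_pow_card_sub_X_natDegree_eq K hq2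
  have hPne : ((X : K[X]) ^ q - X) ≠ 0 := FiniteField.X_pow_card_sub_X_ne_zero K hq2
  set T := ((X : K[X]) ^ q - X).roots.toFinset with hT
  set S := Finset.univ.image (algebraMap F K) with hS
  have hsub : S ⊆ T := by
    intro y hy
    rw [hS, Finset.mem_image] at hy
    obtain ⟨a, -, rfl⟩ := hy
    rw [hT, Multiset.mem_toFinset, mem_roots hPne]
    simp only [IsRoot.def, eval_sub, eval_pow, eval_X]
    rw [← map_pow, ← hF, FiniteField.pow_card, sub_self]
  have hST : S = T := by
    refine Finset.eq_of_subset_of_card_le hsub ?_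
    have h1 : T.card ≤ q := le_trans (Multiset.toFinset_card_le _)
      (le_trans (card_roots' _) (le_of_eq hdeg))
    have h2 : S.card = q := by
      rw [hS, Finset.card_image_of_injective _ (algebraMap F K).injective,
        Finset.card_univ, hF]
    omega
  have hxT : x ∈ T := by
    rw [hT, Multiset.mem_toFinset, mem_roots hPne]
    simp only [IsRoot.def, eval_sub, eval_pow, eval_X]
    rw [hx, sub_self]
  rw [← hST, hS, Finset.mem_image] at hxT
  obtain ⟨a, -, ha⟩ := hxT
  exact ⟨a, ha⟩

end Stmt15Aux


open Polynomial

namespace Stmt15Aux3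

variable {F K : Type*} [Field F] [Fintype F] [Field K] [Fintype K] [Algebra F K]

lemma monic_dvd_eq {f g : F[X]} (hf : f.Monic) (hg : g.Monic) (h : f ∣ g)
    (hd : g.natDegree ≤ f.natDegree) : f = g := by
  obtain ⟨u, rfl⟩ := h
  have hu : u ≠ 0 := by
    intro h0; rw [h0, mul_zero] at hg; exact hg.ne_zero rfl
  have hnd : natDegree (f * u) = natDegree f + natDegree u :=
    natDegree_mul hf.ne_zero hu
  have hu0 : natDegree u = 0 := by omega
  have hc : u = C (u.coeff 0) := eq_C_of_natDegree_eq_zero hu0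
  have : u.coeff 0 = 1 := by
    have := hg.leadingCoeff
    rw [leadingCoeff_mul, hf.leadingCoeff, one_mul, hc, leadingCoeff_C] at this
    exact this
  rw [hc, this, map_one, mul_one]

section

variable (q n : ℕ) (hF : Fintype.card F = q) (hrank : Module.finrank F K = n)
  {f : F[X]} (hm : f.Monic) (hi : Irreducible f) (hd : f.natDegree = n)
  {γ : K} (hr : Polynomial.aeval γ f = 0)

include hF hrank hm hi hd hr

lemma eq_charpoly : f = LinearMap.charpoly (LinearMap.mulLeft F γ) := by
  haveI : Module.Finite F K := Module.Finite.of_finite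
  have hmin : f = minpoly F γ := minpoly.eq_of_irreducible_of_monic hi hr hm
  have hCH : Polynomial.aeval γ (LinearMap.charpoly (LinearMap.mulLeft F γ)) = 0 := by
    have h1 := LinearMap.aeval_self_charpoly (LinearMap.mulLeft F γ)
    have h2 : LinearMap.mulLeft F γ = Algebra.lmul F K γ := rfl
    have h3 := Polynomial.aeval_algHom_apply (Algebra.lmul F K) γ
      (LinearMap.charpoly (LinearMap.mulLeft F γ))
    rw [← h2, h1] at h3
    have h4 := congrArg (fun g : Module.End F K => g 1) h3
    simpa using h4.symm
  have hdvd : f ∣ LinearMap.charpoly (LinearMap.mulLeft F γ) := by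
    rw [hmin]; exact minpoly.dvd F γ hCH
  exact monic_dvd_eq hm (LinearMap.charpoly_monic _) hdvd
    (by rw [LinearMap.charpoly_natDegree, hd, hrank])

end

end Stmt15Aux3

namespace Stmt15Aux3
set_option linter.unusedSectionVars false

variable {F K : Type*} [Field F] [Fintype F] [Field K] [Fintype K] [Algebra F K]

section
variable (q n : ℕ) (hF : Fintype.card F = q) (hrank : Module.finrank F K = n)
  {f : F[X]} (hm : f.Monic) (hi : Irreducible f) (hd : f.natDegree = n)
  {γ : K} (hr : Polynomial.aeval γ f = 0)

include hF hrank hm hi hd hr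

lemma map_eq_prod :
    f.map (algebraMap F K) = ∏ k ∈ Finset.range n, (X - C (γ ^ q ^ k)) := by
  rw [eq_charpoly q n hF hrank hm hi hd hr]
  exact Stmt15Aux2.charpoly_mulLeft_map q n hF hrank γ

lemma root_conj {δ : K} (hδ : Polynomial.aeval δ f = 0) :
    ∃ k, k < n ∧ δ = γ ^ q ^ k := by
  have h1 : Polynomial.eval δ (f.map (algebraMap F K)) = 0 := by
    rw [Polynomial.eval_map, ← Polynomial.aeval_def, hδ]
  rw [map_eq_prod q n hF hrank hm hi hd hr, Polynomial.eval_prod] at h1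
  obtain ⟨k, hk, h2⟩ := Finset.prod_eq_zero_iff.mp h1
  refine ⟨k, Finset.mem_range.mp hk, ?_⟩
  have : δ - γ ^ q ^ k = 0 := by simpa using h2
  exact sub_eq_zero.mp this

lemma conj_distinct : ∀ i j, i < n → j < n → γ ^ q ^ i = γ ^ q ^ j → i = j := by
  have hsep : f.Separable := PerfectField.separable_of_irreducible hi
  have hnd := nodup_roots (hsep.map (f := algebraMap F K))
  rw [map_eq_prod q n hF hrank hm hi hd hr] at hnd
  have heq : (∏ k ∈ Finset.range n, (X - C (γ ^ q ^ k)))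
      = (Multiset.map (fun a => X - C a)
          ((Finset.range n).val.map (fun k => γ ^ q ^ k))).prod := by
    rw [Multiset.map_map]; rfl
  rw [heq, roots_multiset_prod_X_sub_C] at hnd
  intro i j hi' hj' hij
  exact Multiset.inj_on_of_nodup_map hnd i
    (Finset.mem_val.mpr (Finset.mem_range.mpr hi')) j
    (Finset.mem_val.mpr (Finset.mem_range.mpr hj')) hij

lemma no_root_in_F (hn : 2 ≤ n) (t : F) : Polynomial.eval t f ≠ 0 := by
  intro h0
  obtain ⟨g, hg⟩ := dvd_iff_isRoot.mpr h0
  rcases hi.isUnit_or_isUnit hg with h | h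
  · exact Polynomial.not_isUnit_X_sub_C t h
  · have hg0 : g ≠ 0 := by
      rintro rfl; rw [mul_zero] at hg; exact hm.ne_zero hg
    have h2 := natDegree_mul (X_sub_C_ne_zero t) hg0
    rw [← hg, natDegree_X_sub_C, natDegree_eq_zero_of_isUnit h, hd] at h2
    omega

lemma not_in_range (hn : 2 ≤ n) (a : F) : algebraMap F K a ≠ γ := by
  intro h
  have h1 := minpoly.eq_of_irreducible_of_monic hi hr hm
  rw [← h, minpoly.eq_X_sub_C K a] at h1
  have h2 := congrArg natDegree h1
  rw [hd, natDegree_X_sub_C] at h2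
  omega

end
end Stmt15Aux3


namespace Stmt15Aux4

variable {K : Type*} [Field K]

lemma three_point_prop (m00 m01 m10 m11 n00 n01 n10 n11 : K) (x1 x2 x3 y1 y2 y3 : K)
    (h12 : x1 ≠ x2) (h13 : x1 ≠ x3) (h23 : x2 ≠ x3)
    (hdM : m00 * m11 - m01 * m10 ≠ 0) (hdN : n00 * n11 - n01 * n10 ≠ 0)
    (hM1 : m00 * x1 + m01 = y1 * (m10 * x1 + m11))
    (hM2 : m00 * x2 + m01 = y2 * (m10 * x2 + m11))
    (hM3 : m00 * x3 + m01 = y3 * (m10 * x3 + m11))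
    (hN1 : n00 * x1 + n01 = y1 * (n10 * x1 + n11))
    (hN2 : n00 * x2 + n01 = y2 * (n10 * x2 + n11))
    (hN3 : n00 * x3 + n01 = y3 * (n10 * x3 + n11)) :
    ∃ lam : K, lam ≠ 0 ∧ n00 = lam * m00 ∧ n01 = lam * m01 ∧
      n10 = lam * m10 ∧ n11 = lam * m11 := by
  set c2 := m00 * n10 - n00 * m10 with hc2def
  set c1 := m00 * n11 + m01 * n10 - n00 * m11 - n01 * m10 with hc1def
  set c0 := m01 * n11 - n01 * m11 with hc0def
  have hQ1 : c2 * x1 ^ 2 + c1 * x1 + c0 = 0 := by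
    rw [hc2def, hc1def, hc0def]
    linear_combination (n10 * x1 + n11) * hM1 - (m10 * x1 + m11) * hN1
  have hQ2 : c2 * x2 ^ 2 + c1 * x2 + c0 = 0 := by
    rw [hc2def, hc1def, hc0def]
    linear_combination (n10 * x2 + n11) * hM2 - (m10 * x2 + m11) * hN2
  have hQ3 : c2 * x3 ^ 2 + c1 * x3 + c0 = 0 := by
    rw [hc2def, hc1def, hc0def]
    linear_combination (n10 * x3 + n11) * hM3 - (m10 * x3 + m11) * hN3
  have e12 : c2 * (x1 + x2) + c1 = 0 := by
    have h := sub_ne_zero.mpr h12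
    apply mul_left_cancel₀ h
    rw [mul_zero]
    linear_combination hQ1 - hQ2
  have e23 : c2 * (x2 + x3) + c1 = 0 := by
    have h := sub_ne_zero.mpr h23
    apply mul_left_cancel₀ h
    rw [mul_zero]
    linear_combination hQ2 - hQ3
  have hc2 : c2 = 0 := by
    have h := sub_ne_zero.mpr h13
    apply mul_left_cancel₀ h
    rw [mul_zero]
    linear_combination e12 - e23
  have hc1 : c1 = 0 := by linear_combination e12 - (x1 + x2) * hc2
  have hc0 : c0 = 0 := by linear_combination hQ1 - x1 ^ 2 * hc2 - x1 * hc1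
  rw [hc2def] at hc2; rw [hc1def] at hc1; rw [hc0def] at hc0
  set s := m11 * n00 - m01 * n10 with hsdef
  set D := m00 * m11 - m01 * m10 with hDdef
  have k00 : D * n00 = s * m00 := by rw [hsdef, hDdef]; linear_combination m01 * hc2
  have k01 : D * n01 = s * m01 := by rw [hsdef, hDdef]; linear_combination m01 * hc1 - m00 * hc0
  have k10 : D * n10 = s * m10 := by rw [hsdef, hDdef]; linear_combination m11 * hc2
  have k11 : D * n11 = s * m11 := by rw [hsdef, hDdef]; linear_combination m11 * hc1 - m10 * hc0
  have hs : s ≠ 0 := by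
    intro h0
    rw [h0, zero_mul] at k00 k01 k10 k11
    have z00 : n00 = 0 := by
      have := mul_eq_zero.mp k00; tauto
    have z01 : n01 = 0 := by have := mul_eq_zero.mp k01; tauto
    have z10 : n10 = 0 := by have := mul_eq_zero.mp k10; tauto
    have z11 : n11 = 0 := by have := mul_eq_zero.mp k11; tauto
    rw [z00, z01, z10, z11] at hdN
    simp at hdN
  refine ⟨s / D, div_ne_zero hs hdM, ?_, ?_, ?_, ?_⟩
  · rw [div_mul_eq_mul_div, eq_div_iff hdM]; linear_combination k00
  · rw [div_mul_eq_mul_div, eq_div_iff hdM]; linear_combination k01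
  · rw [div_mul_eq_mul_div, eq_div_iff hdM]; linear_combination k10
  · rw [div_mul_eq_mul_div, eq_div_iff hdM]; linear_combination k11

end Stmt15Aux4

namespace Stmt15Aux4
variable {K : Type*} [Field K]

lemma mobius_core (Fr : K →+* K) (x0 x1 x2 x3 y0 y1 y2 y3 : K)
    (hfx0 : Fr x0 = x1) (hfx1 : Fr x1 = x2) (hfx2 : Fr x2 = x3)
    (hfy0 : Fr y0 = y1) (hfy1 : Fr y1 = y2) (hfy2 : Fr y2 = y3)
    (hx01 : x0 ≠ x1) (hx02 : x0 ≠ x2) (hx03 : x0 ≠ x3)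
    (hx12 : x1 ≠ x2) (hx13 : x1 ≠ x3) (hx23 : x2 ≠ x3)
    (hy01 : y0 ≠ y1) (hy02 : y0 ≠ y2) (hy12 : y1 ≠ y2)
    (hχ : (x3 - x1) * (x2 - x0) * ((y3 - y0) * (y2 - y1))
        = (y3 - y1) * (y2 - y0) * ((x3 - x0) * (x2 - x1))) :
    ∃ a b c d : K, Fr a = a ∧ Fr b = b ∧ Fr c = c ∧ Fr d = d ∧
      a * d - b * c ≠ 0 ∧ c * x0 + d ≠ 0 ∧ a * x0 + b = y0 * (c * x0 + d) := by
  have hFrinj : Function.Injective Fr := Fr.injective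
  set p := x2 - x1 with hp
  set r := x2 - x0 with hr
  set u := y2 - y1 with hu
  set v := y2 - y0 with hv
  have hpne : p ≠ 0 := sub_ne_zero.mpr (Ne.symm hx12)
  have hrne : r ≠ 0 := sub_ne_zero.mpr (Ne.symm hx02)
  have hune : u ≠ 0 := sub_ne_zero.mpr (Ne.symm hy12)
  have hvne : v ≠ 0 := sub_ne_zero.mpr (Ne.symm hy02)
  set m00 := -y1 * v * p + y0 * u * r with hm00
  set m01 := y1 * v * x0 * p - y0 * u * x1 * r with hm01
  set m10 := -v * p + u * r with hm10
  set m11 := v * x0 * p - u * x1 * r with hm11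
  have hdet : m00 * m11 - m01 * m10 = u * v * (y0 - y1) * (p * r * (x0 - x1)) := by
    rw [hm00, hm01, hm10, hm11, hu, hv]; ring
  have hdetne : m00 * m11 - m01 * m10 ≠ 0 := by
    rw [hdet]
    exact mul_ne_zero (mul_ne_zero (mul_ne_zero hune hvne)
      (sub_ne_zero.mpr hy01)) (mul_ne_zero (mul_ne_zero hpne hrne) (sub_ne_zero.mpr hx01))
  have hD0 : m10 * x0 + m11 = u * r * (x0 - x1) := by
    rw [hm10, hm11]; ring
  have hD0ne : m10 * x0 + m11 ≠ 0 := by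
    rw [hD0]; exact mul_ne_zero (mul_ne_zero hune hrne) (sub_ne_zero.mpr hx01)
  have hD1 : m10 * x1 + m11 = v * p * (x0 - x1) := by
    rw [hm10, hm11]; ring
  have hD1ne : m10 * x1 + m11 ≠ 0 := by
    rw [hD1]; exact mul_ne_zero (mul_ne_zero hvne hpne) (sub_ne_zero.mpr hx01)
  have hD2 : m10 * x2 + m11 = p * r * (y0 - y1) := by
    rw [hm10, hm11, hp, hr, hu, hv]; ring
  have hD2ne : m10 * x2 + m11 ≠ 0 := by
    rw [hD2]; exact mul_ne_zero (mul_ne_zero hpne hrne) (sub_ne_zero.mpr hy01)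
  have hD3ne : m10 * x3 + m11 ≠ 0 := by
    intro h0
    have h1 : u * r * (x3 - x1) * (y1 - y0) = 0 := by
      rw [hm10, hm11] at h0
      linear_combination hχ - (y3 - y1) * h0
    rcases mul_eq_zero.mp h1 with h2 | h2
    · rcases mul_eq_zero.mp h2 with h3 | h3
      · exact absurd h3 (mul_ne_zero hune hrne)
      · exact absurd h3 (sub_ne_zero.mpr (Ne.symm hx13))
    · exact hy01 (sub_eq_zero.mp h2).symm
  have hS0 : m00 * x0 + m01 = y0 * (m10 * x0 + m11) := by
    rw [hm00, hm01, hm10, hm11]; ring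
  have hS1 : m00 * x1 + m01 = y1 * (m10 * x1 + m11) := by
    rw [hm00, hm01, hm10, hm11]; ring
  have hS2 : m00 * x2 + m01 = y2 * (m10 * x2 + m11) := by
    rw [hm00, hm01, hm10, hm11, hp, hr, hu, hv]; ring
  have hS3 : m00 * x3 + m01 = y3 * (m10 * x3 + m11) := by
    rw [hm00, hm01, hm10, hm11]
    linear_combination -hχ
  -- Frobenius-twisted matrix
  have hN1 : Fr m00 * x1 + Fr m01 = y1 * (Fr m10 * x1 + Fr m11) := by
    have h := congrArg Fr hS0
    simpa only [map_add, map_mul, hfx0, hfy0] using h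
  have hN2 : Fr m00 * x2 + Fr m01 = y2 * (Fr m10 * x2 + Fr m11) := by
    have h := congrArg Fr hS1
    simpa only [map_add, map_mul, hfx1, hfy1] using h
  have hN3 : Fr m00 * x3 + Fr m01 = y3 * (Fr m10 * x3 + Fr m11) := by
    have h := congrArg Fr hS2
    simpa only [map_add, map_mul, hfx2, hfy2] using h
  have hNdet : Fr m00 * Fr m11 - Fr m01 * Fr m10 ≠ 0 := by
    intro h
    apply hdetne
    apply hFrinj
    rw [map_sub, map_mul, map_mul, h, map_zero]
  obtain ⟨lam, hlam, e00, e01, e10, e11⟩ :=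
    three_point_prop m00 m01 m10 m11 (Fr m00) (Fr m01) (Fr m10) (Fr m11)
      x1 x2 x3 y1 y2 y3 hx12 hx13 hx23 hdetne hNdet hS1 hS2 hS3 hN1 hN2 hN3
  have hpivot : ∃ g : K, g ≠ 0 ∧ Fr g = lam * g := by
    by_cases h10 : m10 = 0
    · refine ⟨m11, ?_, e11⟩
      intro h11
      apply hdetne
      rw [h10, h11]; ring
    · exact ⟨m10, h10, e10⟩
  obtain ⟨g, hgne, hfg⟩ := hpivot
  refine ⟨m00 / g, m01 / g, m10 / g, m11 / g, ?_, ?_, ?_, ?_, ?_, ?_, ?_⟩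
  · rw [map_div₀, e00, hfg, mul_div_mul_left _ _ hlam]
  · rw [map_div₀, e01, hfg, mul_div_mul_left _ _ hlam]
  · rw [map_div₀, e10, hfg, mul_div_mul_left _ _ hlam]
  · rw [map_div₀, e11, hfg, mul_div_mul_left _ _ hlam]
  · rw [div_mul_div_comm, div_mul_div_comm, div_sub_div_same]
    exact div_ne_zero hdetne (mul_ne_zero hgne hgne)
  · rw [div_mul_eq_mul_div, ← add_div]
    exact div_ne_zero hD0ne hgne
  · rw [div_mul_eq_mul_div, div_mul_eq_mul_div, ← add_div, ← add_div,
      hS0, mul_div_assoc]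

end Stmt15Aux4


open Polynomial

namespace Stmt15Aux6

variable {K : Type*} [Field K] [Fintype K]

lemma prod_shift_one (q n : ℕ) (hK : Fintype.card K = q ^ n) (x : K) :
    ∏ j ∈ Finset.range n, (X - C ((x ^ q) ^ q ^ j))
      = ∏ j ∈ Finset.range n, (X - C (x ^ q ^ j)) := by
  have hxq : x ^ q ^ n = x := by rw [← hK]; exact FiniteField.pow_card x
  set g : ℕ → K[X] := fun j => X - C (x ^ q ^ j) with hg
  have h1 : ∀ j : ℕ, (X : K[X]) - C ((x ^ q) ^ q ^ j) = g (j + 1) := by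
    intro j
    rw [hg]
    congr 2
    rw [← pow_mul, ← pow_succ']
  rw [Finset.prod_congr rfl fun j _ => h1 j]
  have h2 := Finset.prod_range_succ' g n
  have h3 := Finset.prod_range_succ g n
  have h4 : g n = g 0 := by rw [hg]; simp [hxq]
  have h5 : (∏ j ∈ Finset.range n, g (j + 1)) * g 0
      = (∏ j ∈ Finset.range n, g j) * g 0 := by
    rw [← h2, h3, h4, mul_comm]
  exact mul_right_cancel₀ (X_sub_C_ne_zero (x ^ q ^ 0)) h5

lemma prod_shift (q n k : ℕ) (hK : Fintype.card K = q ^ n) (x : K) :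
    ∏ j ∈ Finset.range n, (X - C ((x ^ q ^ k) ^ q ^ j))
      = ∏ j ∈ Finset.range n, (X - C (x ^ q ^ j)) := by
  induction k with
  | zero => simp
  | succ k ih =>
    have h1 : ∀ j : ℕ, ((x ^ q ^ (k + 1)) ^ q ^ j : K) = (((x ^ q ^ k) ^ q) ^ q ^ j) := by
      intro j
      congr 1
      rw [← pow_mul, ← pow_succ]
    rw [Finset.prod_congr rfl fun j _ => by rw [h1 j]]
    rw [prod_shift_one q n hK (x ^ q ^ k)]
    exact ih

lemma chi_conj (q k : ℕ) (Fr : ℕ → K →+* K) (hFr : ∀ k x, Fr k x = x ^ q ^ k) (γ : K) :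
    (((γ ^ q ^ k) ^ q ^ 3 - (γ ^ q ^ k) ^ q) * ((γ ^ q ^ k) ^ q ^ 2 - γ ^ q ^ k)) /
      (((γ ^ q ^ k) ^ q ^ 3 - γ ^ q ^ k) * ((γ ^ q ^ k) ^ q ^ 2 - (γ ^ q ^ k) ^ q))
    = (((γ ^ q ^ 3 - γ ^ q) * (γ ^ q ^ 2 - γ)) /
        ((γ ^ q ^ 3 - γ) * (γ ^ q ^ 2 - γ ^ q))) ^ q ^ k := by
  have hc : ∀ m : ℕ, ((γ ^ q ^ k) ^ m : K) = (γ ^ m) ^ q ^ k := fun m =>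
    pow_right_comm γ _ m
  conv_rhs => rw [← hFr k]
  rw [map_div₀, map_mul, map_mul, map_sub, map_sub, map_sub, map_sub]
  simp only [hFr, hc]

end Stmt15Aux6

open Polynomial

namespace Stmt15Aux5

lemma cross_ratio_invariant {K : Type*} [Field K] (a b c d : K) (x0 x1 x2 x3 y0 y1 y2 y3 : K)
    (hdet : a * d - b * c ≠ 0)
    (hS0 : a * x0 + b = y0 * (c * x0 + d))
    (hS1 : a * x1 + b = y1 * (c * x1 + d))
    (hS2 : a * x2 + b = y2 * (c * x2 + d))
    (hS3 : a * x3 + b = y3 * (c * x3 + d))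
    (hD0 : c * x0 + d ≠ 0) (hD1 : c * x1 + d ≠ 0)
    (hD2 : c * x2 + d ≠ 0) (hD3 : c * x3 + d ≠ 0)
    (hx03 : x0 ≠ x3) (hx12 : x1 ≠ x2) :
    ((y3 - y1) * (y2 - y0)) / ((y3 - y0) * (y2 - y1))
      = ((x3 - x1) * (x2 - x0)) / ((x3 - x0) * (x2 - x1)) := by
  have key : ∀ xi xj yi yj : K, a * xi + b = yi * (c * xi + d) →
      a * xj + b = yj * (c * xj + d) →
      (yi - yj) * ((c * xi + d) * (c * xj + d)) = (a * d - b * c) * (xi - xj) := by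
    intro xi xj yi yj hi hj
    linear_combination (c * xi + d) * hj - (c * xj + d) * hi
  have hy30 : y3 - y0 ≠ 0 := by
    intro h
    have h2 := key x3 x0 y3 y0 hS3 hS0
    rw [h, zero_mul] at h2
    exact mul_ne_zero hdet (sub_ne_zero.mpr (Ne.symm hx03)) h2.symm
  have hy21 : y2 - y1 ≠ 0 := by
    intro h
    have h2 := key x2 x1 y2 y1 hS2 hS1
    rw [h, zero_mul] at h2
    exact mul_ne_zero hdet (sub_ne_zero.mpr (Ne.symm hx12)) h2.symm
  rw [div_eq_div_iff (mul_ne_zero hy30 hy21)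
    (mul_ne_zero (sub_ne_zero.mpr (Ne.symm hx03)) (sub_ne_zero.mpr (Ne.symm hx12)))]
  have E1 : ((y3 - y1) * ((c * x3 + d) * (c * x1 + d)))
        * ((y2 - y0) * ((c * x2 + d) * (c * x0 + d)))
      = ((a * d - b * c) * (x3 - x1)) * ((a * d - b * c) * (x2 - x0)) := by
    rw [key x3 x1 y3 y1 hS3 hS1, key x2 x0 y2 y0 hS2 hS0]
  have E2 : ((y3 - y0) * ((c * x3 + d) * (c * x0 + d)))
        * ((y2 - y1) * ((c * x2 + d) * (c * x1 + d)))
      = ((a * d - b * c) * (x3 - x0)) * ((a * d - b * c) * (x2 - x1)) := by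
    rw [key x3 x0 y3 y0 hS3 hS0, key x2 x1 y2 y1 hS2 hS1]
  have hP : (c * x0 + d) * (c * x1 + d) * ((c * x2 + d) * (c * x3 + d)) ≠ 0 :=
    mul_ne_zero (mul_ne_zero hD0 hD1) (mul_ne_zero hD2 hD3)
  apply mul_right_cancel₀ hP
  linear_combination (x3 - x0) * (x2 - x1) * E1 - (x3 - x1) * (x2 - x0) * E2

variable {F K : Type*} [Field F] [Field K] [Algebra F K]

lemma aeval_transform (n : ℕ) (a b c d : F) (f : F[X]) (hdf : f.natDegree ≤ n) (α β : K)
    (hS : algebraMap F K a * α + algebraMap F K b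
        = β * (algebraMap F K c * α + algebraMap F K d))
    (hD : algebraMap F K c * α + algebraMap F K d ≠ 0)
    (hroot : Polynomial.aeval α f = 0) :
    Polynomial.aeval β (transform n a b c d f) = 0 := by
  set A := algebraMap F K with hA
  have hnum : (A d * β - A b) * (A c * α + A d) = (A a * A d - A b * A c) * α := by
    linear_combination (-(A d)) * hS
  have hden : (A a - A c * β) * (A c * α + A d) = A a * A d - A b * A c := by
    linear_combination (A c) * hS
  have key : (A c * α + A d) ^ n * Polynomial.aeval β (transform n a b c d f)
      = (A a * A d - A b * A c) ^ n * Polynomial.aeval α f := by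
    rw [transform, map_sum, Finset.mul_sum]
    rw [Polynomial.aeval_eq_sum_range' (lt_of_le_of_lt hdf (Nat.lt_succ_self n)) α,
      Finset.mul_sum]
    refine Finset.sum_congr rfl fun i hi => ?_
    have hin : i ≤ n := Nat.lt_succ_iff.mp (Finset.mem_range.mp hi)
    have expand : Polynomial.aeval β
        (C (f.coeff i) * (C d * X - C b) ^ i * (C a - C c * X) ^ (n - i))
        = A (f.coeff i) * (A d * β - A b) ^ i * (A a - A c * β) ^ (n - i) := by
      simp [hA]
    rw [expand, Algebra.smul_def]
    have hpow : (A c * α + A d) ^ n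
        = (A c * α + A d) ^ i * (A c * α + A d) ^ (n - i) := by
      rw [← pow_add, Nat.add_sub_cancel' hin]
    rw [hpow]
    calc (A c * α + A d) ^ i * (A c * α + A d) ^ (n - i)
          * (A (f.coeff i) * (A d * β - A b) ^ i * (A a - A c * β) ^ (n - i))
        = A (f.coeff i) * ((A d * β - A b) * (A c * α + A d)) ^ i
            * ((A a - A c * β) * (A c * α + A d)) ^ (n - i) := by
          rw [mul_pow, mul_pow]; ring
      _ = A (f.coeff i) * ((A a * A d - A b * A c) * α) ^ i
            * (A a * A d - A b * A c) ^ (n - i) := by rw [hnum, hden]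
      _ = (A a * A d - A b * A c) ^ i * (A a * A d - A b * A c) ^ (n - i)
            * (A (f.coeff i) * α ^ i) := by rw [mul_pow]; ring
      _ = (A a * A d - A b * A c) ^ n * (A (f.coeff i) * α ^ i) := by
          rw [← pow_add, Nat.add_sub_cancel' hin]
  rw [hroot, mul_zero] at key
  rcases mul_eq_zero.mp key with h | h
  · exact absurd h (pow_ne_zero n hD)
  · exact h

lemma deg_aux1 (d b : F) : (C d * X - C b : F[X]).natDegree ≤ 1 := by
  apply (natDegree_sub_le _ _).trans
  apply max_le
  · exact (natDegree_C_mul_le _ _).trans natDegree_X_le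
  · simp

lemma deg_aux1' (a c : F) : (C a - C c * X : F[X]).natDegree ≤ 1 := by
  apply (natDegree_sub_le _ _).trans
  apply max_le
  · simp
  · exact (natDegree_C_mul_le _ _).trans natDegree_X_le

lemma deg_aux2 (x : F) (p : F[X]) (i : ℕ) (h : p.natDegree ≤ 1) :
    (C x * p ^ i).natDegree ≤ i := by
  apply natDegree_mul_le.trans
  have h2 : (p ^ i).natDegree ≤ i := by
    apply natDegree_pow_le.trans
    calc i * p.natDegree ≤ i * 1 := Nat.mul_le_mul_left i h
      _ = i := mul_one i
  simpa using h2

lemma natDegree_transform_le (n : ℕ) (a b c d : F) (f : F[X]) :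
    (transform n a b c d f).natDegree ≤ n := by
  rw [transform]
  apply natDegree_sum_le_of_forall_le
  intro i hi
  have hin : i ≤ n := Nat.lt_succ_iff.mp (Finset.mem_range.mp hi)
  apply natDegree_mul_le.trans
  have h1 := deg_aux2 (f.coeff i) _ i (deg_aux1 d b)
  have h2 : ((C a - C c * X : F[X]) ^ (n - i)).natDegree ≤ n - i := by
    apply natDegree_pow_le.trans
    calc (n - i) * (C a - C c * X : F[X]).natDegree ≤ (n - i) * 1 :=
        Nat.mul_le_mul_left _ (deg_aux1' a c)
      _ = n - i := mul_one _
  omega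

lemma coeff_transform (n : ℕ) (a b c d : F) (f : F[X]) :
    (transform n a b c d f).coeff n
      = ∑ i ∈ Finset.range (n + 1), f.coeff i * d ^ i * (-c) ^ (n - i) := by
  rw [transform, finset_sum_coeff]
  refine Finset.sum_congr rfl fun i hi => ?_
  have hin : i ≤ n := Nat.lt_succ_iff.mp (Finset.mem_range.mp hi)
  have h1 := deg_aux1 d b
  have h2 := deg_aux1' a c
  have hP := deg_aux2 (f.coeff i) _ i h1
  have hQ : ((C a - C c * X : F[X]) ^ (n - i)).natDegree ≤ n - i := by
    apply natDegree_pow_le.trans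
    calc (n - i) * (C a - C c * X : F[X]).natDegree ≤ (n - i) * 1 :=
        Nat.mul_le_mul_left _ h2
      _ = n - i := mul_one _
  have hmul := coeff_mul_add_eq_of_natDegree_le hP hQ
  rw [Nat.add_sub_cancel' hin] at hmul
  rw [hmul]
  have e1 : (C (f.coeff i) * (C d * X - C b) ^ i).coeff i = f.coeff i * d ^ i := by
    have h0 : (C (f.coeff i) : F[X]).natDegree ≤ 0 := by simp
    have h3 : ((C d * X - C b : F[X]) ^ i).natDegree ≤ i := by
      apply natDegree_pow_le.trans
      calc i * (C d * X - C b : F[X]).natDegree ≤ i * 1 := Nat.mul_le_mul_left _ h1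
        _ = i := mul_one _
    have hc := coeff_mul_add_eq_of_natDegree_le h0 h3
    rw [zero_add] at hc
    rw [hc, coeff_C_zero]
    congr 1
    have hcp := coeff_pow_of_natDegree_le (m := i) h1
    rw [mul_one] at hcp
    rw [hcp]
    congr 1
    simp
  have e2 : ((C a - C c * X : F[X]) ^ (n - i)).coeff (n - i) = (-c) ^ (n - i) := by
    have hcp := coeff_pow_of_natDegree_le (m := n - i) h2
    rw [mul_one] at hcp
    rw [hcp]
    congr 1
    simp
  rw [e1, e2]

end Stmt15Aux5

/-- Theorem 2.11 of the paper.  For `n ≥ 4`, two monic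
irreducible degree-`n` polynomials over `F_q` lie in the same `PGL₂(F_q)`-orbit
(where the class of `(a b; c d)` sends the homogenization `f(x,y)` to the monic
scalar multiple of `f(dx − by, −cx + ay)`) if and only if they have the same cross
polynomial, i.e. the characteristic polynomials of multiplication by the cross
ratios `χᵢ` of the conjugates `αᵢ, αᵢ^q, αᵢ^{q²}, αᵢ^{q³}` of constituent roots
agree. -/
theorem stmt_15 (q n : ℕ) (hq : IsPrimePow q) (hn : 4 ≤ n)
    (F K : Type*) [Field F] [Fintype F] (hF : Fintype.card F = q)
    [Field K] [Fintype K] [Algebra F K] [Module.Finite F K] (hK : Fintype.card K = q ^ n)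
    (f₁ f₂ : Polynomial F) (hm₁ : f₁.Monic) (hm₂ : f₂.Monic)
    (hi₁ : Irreducible f₁) (hi₂ : Irreducible f₂)
    (hd₁ : f₁.natDegree = n) (hd₂ : f₂.natDegree = n)
    (α₁ α₂ : K) (hr₁ : Polynomial.aeval α₁ f₁ = 0) (hr₂ : Polynomial.aeval α₂ f₂ = 0)
    (χ₁ χ₂ : K)
    (hχ₁ : χ₁ = ((α₁ ^ q ^ 3 - α₁ ^ q) * (α₁ ^ q ^ 2 - α₁)) /
               ((α₁ ^ q ^ 3 - α₁) * (α₁ ^ q ^ 2 - α₁ ^ q)))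
    (hχ₂ : χ₂ = ((α₂ ^ q ^ 3 - α₂ ^ q) * (α₂ ^ q ^ 2 - α₂)) /
               ((α₂ ^ q ^ 3 - α₂) * (α₂ ^ q ^ 2 - α₂ ^ q))) :
    (∃ a b c d : F, a * d - b * c ≠ 0 ∧
        ∃ e : F, e ≠ 0 ∧ Polynomial.C e * f₂ = transform n a b c d f₁)
      ↔ LinearMap.charpoly (LinearMap.mulLeft F χ₁)
          = LinearMap.charpoly (LinearMap.mulLeft F χ₂) := by
  classical
  have hq2 : 1 < q := hF ▸ Fintype.one_lt_card
  have hrank : Module.finrank F K = n := by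
    have h := Module.card_eq_pow_finrank (K := F) (V := K)
    rw [hK, hF] at h
    exact (Nat.pow_right_injective hq2 h).symm
  obtain ⟨Fr, hFr⟩ := Stmt15Aux2.exists_frobQ (K := K) q hF
  set A := algebraMap F K with hA
  have hAinj : Function.Injective A := (algebraMap F K).injective
  have hfixA : ∀ (i : ℕ) (t : F), (A t) ^ q ^ i = A t := by
    intro i t
    rw [← map_pow]
    congr 1
    rw [← hF]
    exact FiniteField.pow_card_pow i t
  have hdist₁ := Stmt15Aux3.conj_distinct q n hF hrank hm₁ hi₁ hd₁ hr₁
  have hdist₂ := Stmt15Aux3.conj_distinct q n hF hrank hm₂ hi₂ hd₂ hr₂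
  constructor
  · -- forward direction
    rintro ⟨a, b, c, d, hdet, e, he, hCe⟩
    have hdet' : A a * A d - A b * A c ≠ 0 := by
      intro h
      apply hdet
      apply hAinj
      rw [map_sub, map_mul, map_mul, h, map_zero]
    have hD : A c * α₁ + A d ≠ 0 := by
      by_cases hc : c = 0
      · subst hc
        simp only [map_zero, zero_mul, zero_add]
        intro h0
        apply hdet
        have hd0 : d = 0 := hAinj (by rw [h0, map_zero])
        rw [hd0]
        ring
      · intro h0
        have hAc : A c ≠ 0 := fun h => hc (hAinj (by rw [h, map_zero]))
        apply Stmt15Aux3.not_in_range q n hF hrank hm₁ hi₁ hd₁ hr₁ (by omega) (-(d/c))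
        rw [map_neg, map_div₀]
        rw [hA] at h0 hAc
        rw [neg_eq_iff_eq_neg, div_eq_iff hAc]
        linear_combination h0
    set β := (A a * α₁ + A b) / (A c * α₁ + A d) with hβ
    have hS : A a * α₁ + A b = β * (A c * α₁ + A d) := (div_mul_cancel₀ _ hD).symm
    have hroot2 : Polynomial.aeval β f₂ = 0 := by
      have h1 := Stmt15Aux5.aeval_transform n a b c d f₁ (le_of_eq hd₁) α₁ β hS hD hr₁
      rw [← hCe, map_mul, Polynomial.aeval_C] at h1
      rcases mul_eq_zero.mp h1 with h | h
      · exact absurd (hAinj (by rw [h, map_zero])) he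
      · exact h
    obtain ⟨k, hk, hαβ⟩ := Stmt15Aux3.root_conj q n hF hrank hm₂ hi₂ hd₂ hroot2 hr₂
    have hSi : ∀ i : ℕ, A a * α₁ ^ q ^ i + A b = β ^ q ^ i * (A c * α₁ ^ q ^ i + A d) := by
      intro i
      have h := congrArg (Fr i) hS
      simp only [map_add, map_mul] at h
      simp only [hFr, hfixA] at h
      exact h
    have hDi : ∀ i : ℕ, A c * α₁ ^ q ^ i + A d ≠ 0 := by
      intro i h0
      apply hD
      have h1 : Fr i (A c * α₁ + A d) = A c * α₁ ^ q ^ i + A d := by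
        rw [map_add, map_mul]
        simp only [hFr, hfixA]
      rw [← h1] at h0
      exact (map_eq_zero_iff (Fr i) (Fr i).injective).mp h0
    have hx : ∀ i j : ℕ, i < n → j < n → i ≠ j → α₁ ^ q ^ i ≠ α₁ ^ q ^ j :=
      fun i j hi hj hne h => hne (hdist₁ i j hi hj h)
    have hβχ : ((β ^ q ^ 3 - β ^ q) * (β ^ q ^ 2 - β)) /
        ((β ^ q ^ 3 - β) * (β ^ q ^ 2 - β ^ q)) = χ₁ := by
      have hcri := Stmt15Aux5.cross_ratio_invariant (A a) (A b) (A c) (A d)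
        (α₁ ^ q ^ 0) (α₁ ^ q ^ 1) (α₁ ^ q ^ 2) (α₁ ^ q ^ 3)
        (β ^ q ^ 0) (β ^ q ^ 1) (β ^ q ^ 2) (β ^ q ^ 3) hdet'
        (hSi 0) (hSi 1) (hSi 2) (hSi 3) (hDi 0) (hDi 1) (hDi 2) (hDi 3)
        (hx 0 3 (by omega) (by omega) (by omega)) (hx 1 2 (by omega) (by omega) (by omega))
      simp only [pow_zero, pow_one] at hcri
      rw [hχ₁]
      exact hcri
    have hχ2 : χ₂ = χ₁ ^ q ^ k := by
      rw [hχ₂, hαβ, Stmt15Aux6.chi_conj q k Fr hFr β, hβχ]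
    have hcp1 := Stmt15Aux2.charpoly_mulLeft_map q n hF hrank χ₁
    have hcp2 := Stmt15Aux2.charpoly_mulLeft_map q n hF hrank χ₂
    apply Polynomial.map_injective (algebraMap F K) hAinj
    rw [hcp1, hcp2, hχ2]
    exact (Stmt15Aux6.prod_shift q n k hK χ₁).symm
  · -- backward direction
    intro hcp
    have hcp1 := Stmt15Aux2.charpoly_mulLeft_map q n hF hrank χ₁
    have hcp2 := Stmt15Aux2.charpoly_mulLeft_map q n hF hrank χ₂
    have hprod : (∏ j ∈ Finset.range n, (Polynomial.X - Polynomial.C (χ₂ ^ q ^ j)))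
        = ∏ j ∈ Finset.range n, (Polynomial.X - Polynomial.C (χ₁ ^ q ^ j)) := by
      rw [← hcp1, ← hcp2, hcp]
    have heval : Polynomial.eval χ₂
        (∏ j ∈ Finset.range n, (Polynomial.X - Polynomial.C (χ₁ ^ q ^ j))) = 0 := by
      rw [← hprod, Polynomial.eval_prod]
      apply Finset.prod_eq_zero (Finset.mem_range.mpr (show 0 < n by omega))
      simp
    rw [Polynomial.eval_prod] at heval
    obtain ⟨k, hkmem, hk0⟩ := Finset.prod_eq_zero_iff.mp heval
    have hk : k < n := Finset.mem_range.mp hkmem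
    have hχ21 : χ₂ = χ₁ ^ q ^ k := by
      have h1 : χ₂ - χ₁ ^ q ^ k = 0 := by simpa using hk0
      exact sub_eq_zero.mp h1
    set γ := α₁ ^ q ^ k with hγ
    have hrootγ : Polynomial.aeval γ f₁ = 0 := by
      have hmap := Stmt15Aux3.map_eq_prod q n hF hrank hm₁ hi₁ hd₁ hr₁
      have h1 : Polynomial.aeval γ f₁ = Polynomial.eval γ (f₁.map (algebraMap F K)) := by
        rw [Polynomial.eval_map, Polynomial.aeval_def]
      rw [h1, hmap, Polynomial.eval_prod]
      apply Finset.prod_eq_zero (Finset.mem_range.mpr hk)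
      simp [hγ]
    have hdistγ := Stmt15Aux3.conj_distinct q n hF hrank hm₁ hi₁ hd₁ hrootγ
    have hχγ : ((γ ^ q ^ 3 - γ ^ q) * (γ ^ q ^ 2 - γ)) /
        ((γ ^ q ^ 3 - γ) * (γ ^ q ^ 2 - γ ^ q)) = χ₂ := by
      rw [hγ, Stmt15Aux6.chi_conj q k Fr hFr α₁, ← hχ₁, ← hχ21]
    have hxne : ∀ i j : ℕ, i < n → j < n → i ≠ j → γ ^ q ^ i ≠ γ ^ q ^ j :=
      fun i j hi hj hne h => hne (hdistγ i j hi hj h)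
    have hyne : ∀ i j : ℕ, i < n → j < n → i ≠ j → α₂ ^ q ^ i ≠ α₂ ^ q ^ j :=
      fun i j hi hj hne h => hne (hdist₂ i j hi hj h)
    have hx01 : γ ≠ γ ^ q := by
      have := hxne 0 1 (by omega) (by omega) (by omega); simpa using this
    have hx02 : γ ≠ γ ^ q ^ 2 := by
      have := hxne 0 2 (by omega) (by omega) (by omega); simpa using this
    have hx03 : γ ≠ γ ^ q ^ 3 := by
      have := hxne 0 3 (by omega) (by omega) (by omega); simpa using this
    have hx12 : γ ^ q ≠ γ ^ q ^ 2 := by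
      have := hxne 1 2 (by omega) (by omega) (by omega); simpa using this
    have hx13 : γ ^ q ≠ γ ^ q ^ 3 := by
      have := hxne 1 3 (by omega) (by omega) (by omega); simpa using this
    have hx23 : γ ^ q ^ 2 ≠ γ ^ q ^ 3 := by
      have := hxne 2 3 (by omega) (by omega) (by omega); simpa using this
    have hy01 : α₂ ≠ α₂ ^ q := by
      have := hyne 0 1 (by omega) (by omega) (by omega); simpa using this
    have hy02 : α₂ ≠ α₂ ^ q ^ 2 := by
      have := hyne 0 2 (by omega) (by omega) (by omega); simpa using this
    have hy03 : α₂ ≠ α₂ ^ q ^ 3 := by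
      have := hyne 0 3 (by omega) (by omega) (by omega); simpa using this
    have hy12 : α₂ ^ q ≠ α₂ ^ q ^ 2 := by
      have := hyne 1 2 (by omega) (by omega) (by omega); simpa using this
    have hcross : (γ ^ q ^ 3 - γ ^ q) * (γ ^ q ^ 2 - γ)
          * ((α₂ ^ q ^ 3 - α₂) * (α₂ ^ q ^ 2 - α₂ ^ q))
        = (α₂ ^ q ^ 3 - α₂ ^ q) * (α₂ ^ q ^ 2 - α₂)
          * ((γ ^ q ^ 3 - γ) * (γ ^ q ^ 2 - γ ^ q)) := by
      have h := hχγ.trans hχ₂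
      rw [div_eq_div_iff
        (mul_ne_zero (sub_ne_zero.mpr (Ne.symm hx03)) (sub_ne_zero.mpr (Ne.symm hx12)))
        (mul_ne_zero (sub_ne_zero.mpr (Ne.symm hy03)) (sub_ne_zero.mpr (Ne.symm hy12)))] at h
      exact h
    obtain ⟨a', b', c', d', hfa, hfb, hfc, hfd, hdet', hden', hsend'⟩ :=
      Stmt15Aux4.mobius_core (Fr 1) γ (γ ^ q) (γ ^ q ^ 2) (γ ^ q ^ 3)
        α₂ (α₂ ^ q) (α₂ ^ q ^ 2) (α₂ ^ q ^ 3)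
        (by rw [hFr, pow_one]) (by rw [hFr, ← pow_mul, pow_one]; norm_num [pow_succ])
        (by rw [hFr, ← pow_mul, pow_one]; norm_num [pow_succ])
        (by rw [hFr, pow_one]) (by rw [hFr, ← pow_mul, pow_one]; norm_num [pow_succ])
        (by rw [hFr, ← pow_mul, pow_one]; norm_num [pow_succ])
        hx01 hx02 hx03 hx12 hx13 hx23 hy01 hy02 hy12 hcross
    have hfixF : ∀ z : K, Fr 1 z = z → ∃ t : F, A t = z := by
      intro z hz
      apply Stmt15Aux.fixed_of_frob q hF
      rw [hFr, pow_one] at hz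
      exact hz
    obtain ⟨a, ha⟩ := hfixF a' hfa
    obtain ⟨b, hb⟩ := hfixF b' hfb
    obtain ⟨c, hc⟩ := hfixF c' hfc
    obtain ⟨d, hd⟩ := hfixF d' hfd
    have hdetF : a * d - b * c ≠ 0 := by
      intro h
      apply hdet'
      rw [← ha, ← hb, ← hc, ← hd, ← map_mul, ← map_mul, ← map_sub, h, map_zero]
    refine ⟨a, b, c, d, hdetF, ?_⟩
    have hSf : A a * γ + A b = α₂ * (A c * γ + A d) := by
      rw [ha, hb, hc, hd]; exact hsend'
    have hDf : A c * γ + A d ≠ 0 := by rw [hc, hd]; exact hden'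
    have hroot : Polynomial.aeval α₂ (transform n a b c d f₁) = 0 :=
      Stmt15Aux5.aeval_transform n a b c d f₁ (le_of_eq hd₁) γ α₂ hSf hDf hrootγ
    have hmin2 : f₂ = minpoly F α₂ := minpoly.eq_of_irreducible_of_monic hi₂ hr₂ hm₂
    have hdvd : f₂ ∣ transform n a b c d f₁ := by
      rw [hmin2]; exact minpoly.dvd F α₂ hroot
    have hcoeff : (transform n a b c d f₁).coeff n ≠ 0 := by
      rw [Stmt15Aux5.coeff_transform]
      by_cases hc0 : c = 0
      · subst hc0
        have hd0 : d ≠ 0 := by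
          intro h; apply hdetF; rw [h]; ring
        rw [Finset.sum_eq_single n]
        · have h1 : f₁.coeff n = 1 := by rw [← hd₁]; exact hm₁.coeff_natDegree
          rw [h1, Nat.sub_self, pow_zero, one_mul, mul_one]
          exact pow_ne_zero n hd0
        · intro i hi hne
          have h2 : i < n := by
            have := Finset.mem_range.mp hi; omega
          rw [neg_zero, zero_pow (by omega : n - i ≠ 0), mul_zero]
        · intro h; exact absurd (Finset.self_mem_range_succ n) h
      · have heq : ∑ i ∈ Finset.range (n + 1), f₁.coeff i * d ^ i * (-c) ^ (n - i)
            = (-c) ^ n * Polynomial.eval (-(d/c)) f₁ := by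
          rw [Polynomial.eval_eq_sum_range, hd₁, Finset.mul_sum]
          refine Finset.sum_congr rfl fun i hi => ?_
          have hin : i ≤ n := Nat.lt_succ_iff.mp (Finset.mem_range.mp hi)
          have h3 : ((-c) * (-(d/c))) = d := by
            rw [neg_mul_neg, mul_div_cancel₀ _ hc0]
          calc f₁.coeff i * d ^ i * (-c) ^ (n - i)
              = f₁.coeff i * ((-c) * (-(d/c))) ^ i * (-c) ^ (n - i) := by rw [h3]
            _ = (-c) ^ i * (-c) ^ (n - i) * (f₁.coeff i * (-(d/c)) ^ i) := by
                rw [mul_pow]; ring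
            _ = (-c) ^ n * (f₁.coeff i * (-(d/c)) ^ i) := by
                rw [← pow_add, Nat.add_sub_cancel' hin]
        rw [heq]
        exact mul_ne_zero (pow_ne_zero _ (neg_ne_zero.mpr hc0))
          (Stmt15Aux3.no_root_in_F q n hF hrank hm₁ hi₁ hd₁ hr₁ (by omega) _)
    have hgne : transform n a b c d f₁ ≠ 0 := by
      intro h0
      exact hcoeff (by rw [h0, Polynomial.coeff_zero])
    obtain ⟨h, hh⟩ := hdvd
    have hhne : h ≠ 0 := by
      rintro rfl
      rw [mul_zero] at hh
      exact hgne hh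
    have hdegsum : f₂.natDegree + h.natDegree ≤ n := by
      rw [← Polynomial.natDegree_mul hm₂.ne_zero hhne, ← hh]
      exact Stmt15Aux5.natDegree_transform_le n a b c d f₁
    have hh0 : h.natDegree = 0 := by
      rw [hd₂] at hdegsum; omega
    refine ⟨h.coeff 0, ?_, ?_⟩
    · intro h0
      apply hhne
      rw [Polynomial.eq_C_of_natDegree_eq_zero hh0, h0, map_zero]
    · rw [hh, mul_comm f₂ h]
      congr 1
      exact (Polynomial.eq_C_of_natDegree_eq_zero hh0).symm
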